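/- arXiv:2109.07321 — 4 statements merged into one kernel-verified Lean document; each statement's English description precedes it below -/
import Mathlib

section
/- Let σ and σ' be finite sets with σ ⊆ σ', let Δ = σ' \ σ be nonempty, and let σ* be a nonempty finite reference set. Define F(A) = 2·|A ∩ σ*| / (|A| + |σ*|) and P(Δ) = |Δ ∩ σ*| / |Δ|. Then F(σ) ≤ F(σ') if and only if (1/2)·F(σ) ≤ P(Δ). -/
theorem fmeasure_monotone_iff {α : Type*} [DecidableEq α]
    (σ σ' σstar : Finset α) (hsub : σ ⊆ σ') (hΔ : (σ' \ σ).Nonempty)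
    (hstar : σstar.Nonempty) :
    (2 * ((σ ∩ σstar).card : ℚ) / (σ.card + σstar.card) ≤
        2 * ((σ' ∩ σstar).card : ℚ) / (σ'.card + σstar.card) ↔
      (1 / 2) * (2 * ((σ ∩ σstar).card : ℚ) / (σ.card + σstar.card)) ≤
        (((σ' \ σ) ∩ σstar).card : ℚ) / (σ' \ σ).card) := by
  have hcard : σ'.card = σ.card + (σ' \ σ).card := by
    rw [add_comm]
    exact (Finset.card_sdiff_add_card_eq_card hsub).symm
  have hinter : (σ' ∩ σstar).card = (σ ∩ σstar).card + ((σ' \ σ) ∩ σstar).card := by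
    rw [← Finset.card_union_of_disjoint]
    · congr 1
      rw [← Finset.union_inter_distrib_right, Finset.union_sdiff_of_subset hsub]
    · exact Finset.sdiff_disjoint.symm.mono Finset.inter_subset_left
        Finset.inter_subset_left
  have ht : (0:ℚ) < (σstar.card : ℚ) := by exact_mod_cast hstar.card_pos
  have hd : (0:ℚ) < ((σ' \ σ).card : ℚ) := by exact_mod_cast hΔ.card_pos
  have hs : (0:ℚ) ≤ (σ.card : ℚ) := Nat.cast_nonneg _
  have h1 : ((σ'.card : ℚ)) = (σ.card : ℚ) + ((σ' \ σ).card : ℚ) := by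
    exact_mod_cast hcard
  have h2 : (((σ' ∩ σstar).card : ℚ)) =
      ((σ ∩ σstar).card : ℚ) + (((σ' \ σ) ∩ σstar).card : ℚ) := by
    exact_mod_cast hinter
  set a : ℚ := ((σ ∩ σstar).card : ℚ)
  set b : ℚ := (((σ' \ σ) ∩ σstar).card : ℚ)
  set s : ℚ := (σ.card : ℚ)
  set d : ℚ := ((σ' \ σ).card : ℚ)
  set t : ℚ := (σstar.card : ℚ)
  rw [h1, h2]
  have hst : (0:ℚ) < s + t := by linarith
  have hsdt : (0:ℚ) < s + d + t := by linarith
  rw [show (1/2:ℚ) * (2 * a / (s + t)) = a / (s + t) by ring,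
    div_le_div_iff₀ hst hsdt, div_le_div_iff₀ hst hd]
  constructor <;> intro h <;> nlinarith
end

section
/- Let σ and σ' be nonempty finite sets with σ ⊆ σ', Δ = σ' \ σ nonempty, and σ* a finite reference set. If P(σ) ≤ P(Δ) then the f-measure satisfies F(σ) ≤ F(σ'), where P(A) = |A ∩ σ*|/|A| and F(A) = 2·|A ∩ σ*|/(|A| + |σ*|) with σ* nonempty. -/
theorem precision_cond_implies_fmeasure_mono {α : Type*} [DecidableEq α]
    (σ σ' σstar : Finset α) (hσ : σ.Nonempty) (hσ' : σ'.Nonempty)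
    (hsub : σ ⊆ σ') (hΔ : (σ' \ σ).Nonempty) (hstar : σstar.Nonempty)
    (hP : ((σ ∩ σstar).card : ℚ) / σ.card ≤ (((σ' \ σ) ∩ σstar).card : ℚ) / (σ' \ σ).card) :
    2 * ((σ ∩ σstar).card : ℚ) / (σ.card + σstar.card) ≤
      2 * ((σ' ∩ σstar).card : ℚ) / (σ'.card + σstar.card) := by
  have hcard : σ'.card = σ.card + (σ' \ σ).card := by
    have := Finset.card_le_card hsub
    rw [Finset.card_sdiff_of_subset hsub]; omega
  have hint : (σ' ∩ σstar).card = (σ ∩ σstar).card + ((σ' \ σ) ∩ σstar).card := by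
    rw [← Finset.card_union_of_disjoint]
    · congr 1
      rw [← Finset.union_inter_distrib_right, Finset.union_sdiff_of_subset hsub]
    · exact Finset.disjoint_left.mpr fun x hx hy =>
        (Finset.mem_sdiff.mp (Finset.mem_inter.mp hy).1).2 (Finset.mem_inter.mp hx).1
  have hs : (0:ℚ) < σ.card := by exact_mod_cast Finset.card_pos.mpr hσ
  have hd : (0:ℚ) < (σ' \ σ).card := by exact_mod_cast Finset.card_pos.mpr hΔ
  have hm : (0:ℚ) < σstar.card := by exact_mod_cast Finset.card_pos.mpr hstar
  have h1 : (σ'.card : ℚ) = σ.card + (σ' \ σ).card := by exact_mod_cast hcard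
  have h2 : ((σ' ∩ σstar).card : ℚ) = (σ ∩ σstar).card + ((σ' \ σ) ∩ σstar).card := by
    exact_mod_cast hint
  set a := ((σ ∩ σstar).card : ℚ)
  set b := (((σ' \ σ) ∩ σstar).card : ℚ)
  set s := (σ.card : ℚ)
  set d := ((σ' \ σ).card : ℚ)
  set m := (σstar.card : ℚ)
  have ha : 0 ≤ a := by positivity
  have hb : 0 ≤ b := by positivity
  have hP' : a * d ≤ b * s := (div_le_div_iff₀ hs hd).mp hP
  rw [h1, h2, div_le_div_iff₀ (by linarith) (by linarith)]
  nlinarith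
end

section
/- Let σ be a finite set with each x ∈ σ correct with probability p(x), let the reference match have deterministic size m > 0, and let σ' = σ ∪ {Δ} with Δ ∉ σ correct with probability q. Define E[F(σ)] = 2·(Σ_{x∈σ} p(x))/(|σ| + m) and E[F(σ')] = 2·(Σ_{x∈σ} p(x) + q)/(|σ| + 1 + m). Then E[F(σ)] ≤ E[F(σ')] if and only if (1/2)·E[F(σ)] ≤ q. -/
theorem expected_fmeasure_iff {α : Type*} [DecidableEq α]
    (σ : Finset α) (p : α → ℝ) (q : ℝ) (m : ℕ) (hm : 0 < m)
    (hp : ∀ x ∈ σ, p x ∈ Set.Icc (0 : ℝ) 1) (hq : q ∈ Set.Icc (0 : ℝ) 1)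
    (Δ : α) (hΔ : Δ ∉ σ) :
    (2 * (∑ x ∈ σ, p x) / (σ.card + m) ≤
        2 * ((∑ x ∈ σ, p x) + q) / (σ.card + 1 + m) ↔
      (1 / 2) * (2 * (∑ x ∈ σ, p x) / (σ.card + m)) ≤ q) := by
  have hA : (0:ℝ) < σ.card + m := by
    have : (0:ℝ) < m := by exact_mod_cast hm
    positivity
  have hB : (0:ℝ) < σ.card + 1 + m := by
    have : (0:ℝ) < m := by exact_mod_cast hm
    positivity
  rw [div_le_div_iff₀ hA hB]
  have : (1 / 2) * (2 * (∑ x ∈ σ, p x) / (σ.card + m)) =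
      (∑ x ∈ σ, p x) / (σ.card + m) := by ring
  rw [this, div_le_iff₀ hA]
  constructor <;> intro h <;> nlinarith [hA, hB]
end

section
/- Let σ and σ' be nonempty finite sets with σ ⊆ σ' and Δ = σ' \ σ nonempty, and σ* a nonempty finite reference set. If P(Δ) < (1/2)·F(σ), then F(σ') < F(σ), i.e., adding Δ strictly decreases the f-measure, where P(Δ) = |Δ ∩ σ*|/|Δ| and F(A) = 2·|A ∩ σ*|/(|A| + |σ*|). -/
theorem fmeasure_strict_decrease {α : Type*} [DecidableEq α]
    (σ σ' σstar : Finset α) (hσ : σ.Nonempty) (hσ' : σ'.Nonempty)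
    (hsub : σ ⊆ σ') (hΔ : (σ' \ σ).Nonempty) (hstar : σstar.Nonempty)
    (hP : (((σ' \ σ) ∩ σstar).card : ℚ) / (σ' \ σ).card <
      (1 / 2) * (2 * ((σ ∩ σstar).card : ℚ) / (σ.card + σstar.card))) :
    2 * ((σ' ∩ σstar).card : ℚ) / (σ'.card + σstar.card) <
      2 * ((σ ∩ σstar).card : ℚ) / (σ.card + σstar.card) := by
  have hle := Finset.card_le_card hsub
  have hcard : σ'.card = σ.card + (σ' \ σ).card := by
    rw [Finset.card_sdiff_of_subset hsub]; omega
  have hicard : (σ' ∩ σstar).card = (σ ∩ σstar).card + ((σ' \ σ) ∩ σstar).card := by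
    have h1 : σ ∩ σstar ∪ (σ' \ σ) ∩ σstar = σ' ∩ σstar := by
      rw [← Finset.union_inter_distrib_right, Finset.union_sdiff_of_subset hsub]
    have h2 : Disjoint (σ ∩ σstar) ((σ' \ σ) ∩ σstar) :=
      Finset.sdiff_disjoint.symm.mono Finset.inter_subset_left Finset.inter_subset_left
    rw [← h1, Finset.card_union_of_disjoint h2]
  have hd : (0:ℚ) < ((σ' \ σ).card : ℚ) := by
    exact_mod_cast Finset.card_pos.mpr hΔ
  have hs : (0:ℚ) < (σ.card : ℚ) + (σstar.card : ℚ) := by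
    have h1 : (0:ℚ) < (σ.card : ℚ) := by exact_mod_cast Finset.card_pos.mpr hσ
    have h2 : (0:ℚ) < (σstar.card : ℚ) := by exact_mod_cast Finset.card_pos.mpr hstar
    linarith
  have heq : (1 / 2 : ℚ) * (2 * ((σ ∩ σstar).card : ℚ) / (σ.card + σstar.card))
      = ((σ ∩ σstar).card : ℚ) / ((σ.card : ℚ) + σstar.card) := by ring
  rw [heq, div_lt_div_iff₀ hd hs] at hP
  rw [hicard, hcard]
  push_cast
  rw [div_lt_div_iff₀ (by linarith) hs]
  have hb : (0:ℚ) ≤ (((σ' \ σ) ∩ σstar).card : ℚ) := Nat.cast_nonneg _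
  have ha : (0:ℚ) ≤ ((σ ∩ σstar).card : ℚ) := Nat.cast_nonneg _
  nlinarith
end
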